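/- Let G be a discriminator function with strong-convexity constant M > 0 and let λ > 0. Then the map c ↦ max(0, (G')⁻¹(c/λ)) is Lipschitz on ℝ with Lipschitz constant 1/(λM). Consequently, the function g_λ(c) := sup_{t ≥ 0}(t·c − λ·G(t)) is differentiable on ℝ with derivative g_λ'(c) = max(0, (G')⁻¹(c/λ)), and g_λ' is (1/(λM))-Lipschitz; in particular g_λ is (1/(λM))-smooth. (Curvature/smoothness of the discriminator's conjugate, exploited in breaking the bias–uncertainty tradeoff.) -/

import Mathlib

/-- Lipschitz curvature/smoothness of the discriminator's
conjugate `g_λ(c) = sup_{t ≥ 0} (t·c − λ·G(t))`. -/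
theorem stmt_14
    (G : ℝ → ℝ) (M : ℝ) (hM : 0 < M)
    (hdiff : Differentiable ℝ G)
    (hconv : ConvexOn ℝ Set.univ (fun x => G x - M / 2 * x ^ 2))
    (hnonneg : ∀ x, 0 ≤ G x) (hone : G 1 = 0)
    (lam : ℝ) (hlam : 0 < lam) :
    let tstar : ℝ → ℝ := fun c => max 0 (Function.invFun (deriv G) (c / lam))
    let g : ℝ → ℝ := fun c => ⨆ t : Set.Ici (0 : ℝ), ((t : ℝ) * c - lam * G t)
    -- the maximizer map is (1/(λM))-Lipschitz
    LipschitzWith (1 / (lam * M)).toNNReal tstar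
    -- g is differentiable with derivative `tstar`
    ∧ (∀ c : ℝ, HasDerivAt g (tstar c) c)
    -- hence `g` is (1/(λM))-smooth: its derivative is (1/(λM))-Lipschitz
    ∧ LipschitzWith (1 / (lam * M)).toNNReal (deriv g) := by
  intro tstar g
  set L : ℝ := 1 / (lam * M) with hLdef
  have hlamM : 0 < lam * M := mul_pos hlam hM
  have hL0 : 0 ≤ L := le_of_lt (by positivity)
  -- derivative of the auxiliary function
  have hH : ∀ x : ℝ, HasDerivAt (fun x => G x - M / 2 * x ^ 2)
      (deriv G x - M * x) x := by
    intro x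
    have h1 := ((hdiff x).hasDerivAt).sub ((hasDerivAt_pow 2 x).const_mul (M / 2))
    refine h1.congr_deriv ?_
    push_cast; ring
  -- strong monotonicity of deriv G
  have key : ∀ ⦃x y : ℝ⦄, x ≤ y → M * (y - x) ≤ deriv G y - deriv G x := by
    have hmono := hconv.monotoneOn_deriv (fun x _ => ((hH x).differentiableAt))
    intro x y hxy
    have h1 := hmono (Set.mem_univ x) (Set.mem_univ y) hxy
    rw [(hH x).deriv, (hH y).deriv] at h1
    linarith
  have hstrict : StrictMono (deriv G) := by
    intro x y hxy
    have := key hxy.le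
    nlinarith
  -- surjectivity of deriv G
  have hsurj : Function.Surjective (deriv G) := by
    intro v
    set d := deriv G 0 with hd
    set a : ℝ := min (-1) ((v - d) / M - 1) with ha
    set b : ℝ := max 1 ((v - d) / M + 1) with hb
    have ha0 : a ≤ 0 := le_trans (min_le_left _ _) (by norm_num)
    have hb0 : 0 ≤ b := le_trans (by norm_num) (le_max_left _ _)
    have hab : a ≤ b := ha0.trans hb0
    have hva : deriv G a < v := by
      have h1 := key ha0
      have h2 : M * a ≤ M * ((v - d) / M - 1) :=
        mul_le_mul_of_nonneg_left (min_le_right _ _) hM.le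
      have h3 : M * ((v - d) / M - 1) = v - d - M := by field_simp
      nlinarith
    have hvb : v < deriv G b := by
      have h1 := key hb0
      have h2 : M * ((v - d) / M + 1) ≤ M * b :=
        mul_le_mul_of_nonneg_left (le_max_right _ _) hM.le
      have h3 : M * ((v - d) / M + 1) = v - d + M := by field_simp
      nlinarith
    have hd2 : ∀ x ∈ Set.Icc a b, HasDerivWithinAt G (deriv G x) (Set.Icc a b) x :=
      fun x _ => (hdiff x).hasDerivAt.hasDerivWithinAt
    obtain ⟨x, _, hx⟩ := exists_hasDerivWithinAt_eq_of_gt_of_lt hab hd2 hva hvb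
    exact ⟨x, hx⟩
  set inv : ℝ → ℝ := Function.invFun (deriv G) with hinvdef
  have hinv : ∀ y, deriv G (inv y) = y := fun y => Function.rightInverse_invFun hsurj y
  -- the inverse is (1/M)-Lipschitz
  have hinvlip : ∀ u v : ℝ, |inv u - inv v| ≤ |u - v| / M := by
    have main : ∀ u v : ℝ, inv v ≤ inv u → |inv u - inv v| ≤ |u - v| / M := by
      intro u v huv
      have h1 := key huv
      rw [hinv, hinv] at h1
      have hvu : v ≤ u := by nlinarith
      rw [abs_of_nonneg (by linarith), abs_of_nonneg (by linarith), le_div_iff₀ hM]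
      nlinarith
    intro u v
    rcases le_total (inv v) (inv u) with h | h
    · exact main u v h
    · rw [abs_sub_comm, abs_sub_comm u v]; exact main v u h
  -- Lipschitz bound for tstar
  have htlip : ∀ a b : ℝ, |tstar a - tstar b| ≤ L * |a - b| := by
    intro a b
    have h1 : |tstar a - tstar b| ≤ |inv (a / lam) - inv (b / lam)| := by
      have h := abs_max_sub_max_le_abs (inv (a / lam)) (inv (b / lam)) 0
      rw [max_comm (inv (a / lam)) 0, max_comm (inv (b / lam)) 0] at h
      exact h
    have h2 := hinvlip (a / lam) (b / lam)
    have h3 : |a / lam - b / lam| = |a - b| / lam := by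
      rw [div_sub_div_same, abs_div, abs_of_pos hlam]
    calc |tstar a - tstar b| ≤ |a / lam - b / lam| / M := h1.trans h2
      _ = L * |a - b| := by rw [h3, hLdef]; ring
  have hlip : LipschitzWith L.toNNReal tstar := by
    apply LipschitzWith.of_dist_le_mul
    intro a b
    rw [Real.dist_eq, Real.dist_eq, Real.coe_toNNReal _ hL0]
    exact htlip a b
  -- convexity of G and the gradient inequality
  have hGconv : ConvexOn ℝ Set.univ G := by
    have hsq : ConvexOn ℝ Set.univ (fun x : ℝ => M / 2 * x ^ 2) := by
      have h := (Even.convexOn_pow (even_two)).smul (c := M / 2) (by positivity)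
      simpa [smul_eq_mul] using h
    have h := hconv.add hsq
    have heq : ((fun x => G x - M / 2 * x ^ 2) + fun x : ℝ => M / 2 * x ^ 2) = G := by
      funext x; simp [Pi.add_apply]
    rwa [heq] at h
  have hgrad : ∀ s t : ℝ, G s + deriv G s * (t - s) ≤ G t := by
    intro s t
    rcases lt_trichotomy s t with h | h | h
    · have h1 := hGconv.deriv_le_slope (Set.mem_univ s) (Set.mem_univ t) h (hdiff s)
      rw [slope_def_field, le_div_iff₀ (by linarith : (0:ℝ) < t - s)] at h1
      nlinarith
    · simp [h]
    · have h1 := hGconv.slope_le_deriv (Set.mem_univ t) (Set.mem_univ s) h (hdiff s)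
      rw [slope_def_field, div_le_iff₀ (by linarith : (0:ℝ) < s - t)] at h1
      nlinarith
  have hts0 : ∀ c, 0 ≤ tstar c := fun c => le_max_left _ _
  -- maximizer property
  have hkey : ∀ c : ℝ, ∀ t : ℝ, 0 ≤ t →
      t * c - lam * G t ≤ tstar c * c - lam * G (tstar c) := by
    intro c t ht
    set s := tstar c with hs
    have hgr := hgrad s t
    have hineq : (t - s) * (c - lam * deriv G s) ≤ 0 := by
      by_cases h0 : 0 ≤ inv (c / lam)
      · have hseq : s = inv (c / lam) := max_eq_right h0
        have : deriv G s = c / lam := by rw [hseq, hinv]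
        rw [this]
        have : c - lam * (c / lam) = 0 := by field_simp; ring
        rw [this, mul_zero]
      · push_neg at h0
        have hseq : s = 0 := max_eq_left h0.le
        have hlt : c / lam < deriv G 0 := by
          have := hstrict h0
          rwa [hinv] at this
        have hc : c < lam * deriv G 0 := by
          rw [div_lt_iff₀ hlam] at hlt; linarith
        rw [hseq]
        have h1 : 0 ≤ t - 0 := by linarith
        have h2 : c - lam * deriv G 0 ≤ 0 := by linarith
        exact mul_nonpos_of_nonneg_of_nonpos h1 h2
    nlinarith
  -- boundedness and value of the sup
  have hbdd : ∀ c : ℝ, BddAbove (Set.range fun t : Set.Ici (0:ℝ) =>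
      (t : ℝ) * c - lam * G t) := by
    intro c
    refine ⟨tstar c * c - lam * G (tstar c), ?_⟩
    rintro _ ⟨t, rfl⟩
    exact hkey c t t.2
  have hg_eq : ∀ c, g c = tstar c * c - lam * G (tstar c) := by
    intro c
    refine le_antisymm (ciSup_le fun t => hkey c t t.2) ?_
    exact le_ciSup (hbdd c) ⟨tstar c, hts0 c⟩
  have hle : ∀ c c' : ℝ, g c + tstar c * (c' - c) ≤ g c' := by
    intro c c'
    have h1 : tstar c * c' - lam * G (tstar c) ≤ g c' :=
      le_ciSup (hbdd c') ⟨tstar c, hts0 c⟩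
    rw [hg_eq c]
    linarith
  -- the sandwich bound
  have hsand : ∀ c c' : ℝ,
      |g c' - g c - tstar c * (c' - c)| ≤ L * (c' - c) ^ 2 := by
    intro c c'
    have h1 := hle c c'
    have h2 := hle c' c
    have h3 : g c' - g c - tstar c * (c' - c) ≤ (tstar c' - tstar c) * (c' - c) := by
      nlinarith
    have h4 : (tstar c' - tstar c) * (c' - c) ≤ L * (c' - c) ^ 2 := by
      have := htlip c' c
      calc (tstar c' - tstar c) * (c' - c) ≤ |tstar c' - tstar c| * |c' - c| := by
            rw [← abs_mul]; exact le_abs_self _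
        _ ≤ (L * |c' - c|) * |c' - c| := by
            apply mul_le_mul_of_nonneg_right _ (abs_nonneg _)
            exact this
        _ = L * (c' - c) ^ 2 := by rw [mul_assoc, ← abs_mul, ← sq, abs_of_nonneg (sq_nonneg _)]
    rw [abs_le]
    constructor
    · have : 0 ≤ g c' - g c - tstar c * (c' - c) := by linarith
      nlinarith [sq_nonneg (c' - c)]
    · linarith
  -- differentiability
  have hd : ∀ c : ℝ, HasDerivAt g (tstar c) c := by
    intro c
    rw [hasDerivAt_iff_isLittleO]
    have hBigO : (fun c' => g c' - g c - (c' - c) • tstar c)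
        =O[nhds c] (fun c' => (c' - c) ^ 2) := by
      apply Asymptotics.IsBigO.of_bound L
      filter_upwards with c'
      have := hsand c c'
      simpa [Real.norm_eq_abs, abs_of_nonneg (sq_nonneg (c' - c)), mul_comm, smul_eq_mul]
        using this
    have hsmall : (fun c' : ℝ => (c' - c) ^ 2) =o[nhds c] (fun c' => c' - c) := by
      have h1 : (fun c' : ℝ => c' - c) =o[nhds c] (fun _ => (1 : ℝ)) := by
        rw [Asymptotics.isLittleO_one_iff]
        have : Filter.Tendsto (fun c' : ℝ => c' - c) (nhds c) (nhds (c - c)) :=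
          (continuous_id.sub continuous_const).tendsto c
        simpa using this
      have h2 := h1.mul_isBigO (Asymptotics.isBigO_refl (fun c' : ℝ => c' - c) (nhds c))
      simpa [sq] using h2
    exact hBigO.trans_isLittleO hsmall
  refine ⟨hlip, hd, ?_⟩
  have : deriv g = tstar := funext fun c => (hd c).deriv
  rw [this]
  exact hlip
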